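/- Let p be a prime and n ≥ 0 an integer. Let A be a subalgebra of the product ℤ_p-algebra (ℤ_p)^(p^n) which is a local ring with maximal ideal 𝔪, which is free of rank p^n as a ℤ_p-module, and which is preserved by the ℤ_p-algebra automorphism σ of (ℤ_p)^(p^n) given by cyclic permutation of the coordinates. Assume that σ acts trivially on 𝔪/𝔪², i.e., σ(x) − x ∈ 𝔪² for every x ∈ 𝔪. Then n = 0 if p ≠ 2, and n ≤ 1 if p = 2. -/

import Mathlib

set_option maxHeartbeats 1000000
set_option synthInstance.maxHeartbeats 1000000

open Fin.NatCast

namespace Stmt5Aux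

open IsLocalRing

/-- cyclic shift by `t` of a vector -/
def sh {α : Type*} {N : ℕ} [NeZero N] (t : ℕ) (x : Fin N → α) : Fin N → α :=
  fun i => x (i + (t : Fin N))

theorem sh_mul {α : Type*} [Mul α] {N : ℕ} [NeZero N] (t : ℕ) (x y : Fin N → α) :
    sh t (x * y) = sh t x * sh t y := rfl

/-- builder for divisibility submodules -/
noncomputable def mkSub {p : ℕ} [Fact p.Prime] {N : ℕ} (c : ℤ_[p])
    (T : (Fin N → ℤ_[p]) → ℕ → ℤ_[p])
    (h1 : ∀ a b l, T (a + b) l = T a l + T b l)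
    (h2 : ∀ (r : ℤ_[p]) a l, T (r • a) l = r * T a l) :
    Submodule ℤ_[p] (Fin N → ℤ_[p]) where
  carrier := {y | ∀ l, c ∣ T y l}
  add_mem' := fun ha hb l => h1 _ _ l ▸ dvd_add (ha l) (hb l)
  zero_mem' := fun l => by
    have h := h2 0 0 l
    rw [zero_smul, zero_mul] at h
    rw [h]
    exact dvd_zero c
  smul_mem' := fun r a ha l => by rw [h2]; exact (ha l).mul_left r

theorem mem_mkSub {p : ℕ} [Fact p.Prime] {N : ℕ} {c : ℤ_[p]}
    {T : (Fin N → ℤ_[p]) → ℕ → ℤ_[p]} {h1 h2} {y : Fin N → ℤ_[p]} :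
    y ∈ mkSub c T h1 h2 ↔ ∀ l, c ∣ T y l := Iff.rfl

section Main

variable {p : ℕ} [hp : Fact p.Prime] {n : ℕ}
  {A : Subalgebra ℤ_[p] (Fin (p ^ n) → ℤ_[p])} [NeZero (p ^ n)] [IsLocalRing A]

/-- the maximal ideal of `A` consists of the elements all of whose coordinates are
divisible by `p`. -/
theorem mker (i : Fin (p ^ n)) (x : A) :
    x ∈ maximalIdeal A ↔ (p : ℤ_[p]) ∣ (x : Fin (p ^ n) → ℤ_[p]) i := by
  haveI : NeZero p := ⟨hp.out.ne_zero⟩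
  set ψ : A →+* ZMod p :=
    (PadicInt.toZMod).comp (((Pi.evalRingHom (fun _ => ℤ_[p]) i)).comp (A.val : A →ₐ[ℤ_[p]] _).toRingHom) with hψ
  have happ : ∀ y : A, ψ y = PadicInt.toZMod ((y : Fin (p ^ n) → ℤ_[p]) i) := fun y => rfl
  have hsurj : Function.Surjective ψ := by
    intro z
    refine ⟨algebraMap ℤ_[p] A ((z.val : ℕ) : ℤ_[p]), ?_⟩
    rw [happ]
    have h1 : ((algebraMap ℤ_[p] A ((z.val : ℕ) : ℤ_[p]) : A) : Fin (p ^ n) → ℤ_[p]) i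
        = ((z.val : ℕ) : ℤ_[p]) := by
      simp
    rw [h1, map_natCast]
    exact ZMod.natCast_rightInverse z
  have hmax : RingHom.ker ψ = maximalIdeal A :=
    IsLocalRing.eq_maximalIdeal (RingHom.ker_isMaximal_of_surjective ψ hsurj)
  rw [← hmax, RingHom.mem_ker, happ,
    ← RingHom.mem_ker, PadicInt.ker_toZMod, PadicInt.maximalIdeal_eq_span_p,
    Ideal.mem_span_singleton]

/-- the image in the ambient ring of the square of the maximal ideal -/
noncomputable def WA (A : Subalgebra ℤ_[p] (Fin (p ^ n) → ℤ_[p])) [IsLocalRing A] :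
    Submodule ℤ_[p] (Fin (p ^ n) → ℤ_[p]) :=
  Submodule.map (A.val.toLinearMap) (((maximalIdeal A) ^ 2).restrictScalars ℤ_[p])

theorem WA_mul {x y : Fin (p ^ n) → ℤ_[p]} (hx : x ∈ A) (hy : y ∈ A)
    (hx' : ∀ i, (p : ℤ_[p]) ∣ x i) (hy' : ∀ i, (p : ℤ_[p]) ∣ y i) :
    x * y ∈ WA A := by
  have hmem : (⟨x, hx⟩ : A) * ⟨y, hy⟩ ∈ ((maximalIdeal A) ^ 2).restrictScalars ℤ_[p] := by
    rw [Submodule.restrictScalars_mem, sq]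
    exact Ideal.mul_mem_mul ((mker 0 _).mpr (hx' 0)) ((mker 0 _).mpr (hy' 0))
  exact Submodule.mem_map_of_mem (f := A.val.toLinearMap) hmem

theorem WA_le (Λ : Submodule ℤ_[p] (Fin (p ^ n) → ℤ_[p]))
    (h : ∀ x y : Fin (p ^ n) → ℤ_[p], x ∈ A → y ∈ A →
      (∀ i, (p : ℤ_[p]) ∣ x i) → (∀ i, (p : ℤ_[p]) ∣ y i) → x * y ∈ Λ) :
    ∀ w ∈ WA A, w ∈ Λ := by
  intro w hw
  obtain ⟨z, hz, rfl⟩ := Submodule.mem_map.mp hw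
  rw [Submodule.restrictScalars_mem, sq] at hz
  have key : ∀ z : A, z ∈ maximalIdeal A * maximalIdeal A →
      (z : Fin (p ^ n) → ℤ_[p]) ∈ Λ := by
    intro z hz
    refine Submodule.mul_induction_on
      (C := fun z : A => (z : Fin (p ^ n) → ℤ_[p]) ∈ Λ) hz ?_ ?_
    · intro a ha b hb
      push_cast
      exact h _ _ a.2 b.2 (fun i => (mker i a).mp ha) (fun i => (mker i b).mp hb)
    · intro a b ha hb
      push_cast
      exact Λ.add_mem ha hb
  exact key z hz

theorem WA_coord {w : Fin (p ^ n) → ℤ_[p]} (hw : w ∈ WA A) (i : Fin (p ^ n)) :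
    (p : ℤ_[p]) ^ 2 ∣ w i := by
  have key := WA_le (A := A)
    (mkSub ((p : ℤ_[p]) ^ 2) (fun y l => y ((l : ℕ) : Fin (p ^ n)))
      (fun a b l => rfl) (fun r a l => rfl))
    (by
      intro x y hx hy hx' hy' l
      show (p : ℤ_[p]) ^ 2 ∣ (x * y) ((l : ℕ) : Fin (p ^ n))
      rw [Pi.mul_apply, sq]
      exact mul_dvd_mul (hx' _) (hy' _)) w hw
  simpa using key i.val

section Sigma

variable (σA : A → A)
  (hσA : ∀ x : A, (σA x : Fin (p ^ n) → ℤ_[p]) = fun i => (x : Fin (p ^ n) → ℤ_[p]) (i + 1))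

include hσA

theorem shA_mem : ∀ (t : ℕ) {x : Fin (p ^ n) → ℤ_[p]}, x ∈ A → sh t x ∈ A := by
  intro t
  induction t with
  | zero =>
    intro x hx
    have : sh 0 x = x := by
      funext i; simp [sh]
    rwa [this]
  | succ t ih =>
    intro x hx
    have h1 : sh 1 x ∈ A := by
      have hmem := (σA ⟨x, hx⟩).2
      have : sh 1 x = ((σA ⟨x, hx⟩ : A) : Fin (p ^ n) → ℤ_[p]) := by
        rw [hσA]; funext i; simp [sh]
      rwa [this]
    have : sh (t + 1) x = sh t (sh 1 x) := by
      funext i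
      show x (i + ((t : ℕ) + 1 : ℕ)) = x (i + (t : Fin (p ^ n)) + 1)
      push_cast
      rw [add_assoc]
    rw [this]
    exact ih h1

theorem WA_sh (t : ℕ) {w : Fin (p ^ n) → ℤ_[p]} (hw : w ∈ WA A) : sh t w ∈ WA A := by
  have Lsh : (Fin (p ^ n) → ℤ_[p]) →ₗ[ℤ_[p]] (Fin (p ^ n) → ℤ_[p]) :=
    { toFun := sh t, map_add' := fun a b => rfl, map_smul' := fun r a => rfl }
  refine WA_le ((WA A).comap
    ({ toFun := sh t, map_add' := fun a b => rfl, map_smul' := fun r a => rfl } :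
      (Fin (p ^ n) → ℤ_[p]) →ₗ[ℤ_[p]] (Fin (p ^ n) → ℤ_[p]))) ?_ w hw
  intro x y hx hy hx' hy'
  show sh t (x * y) ∈ WA A
  rw [sh_mul]
  exact WA_mul (shA_mem σA hσA t hx) (shA_mem σA hσA t hy)
    (fun i => hx' _) (fun i => hy' _)

variable (htriv : ∀ x : A, x ∈ maximalIdeal A → σA x - x ∈ (maximalIdeal A) ^ 2)

include htriv

theorem delta_one_mem {x : Fin (p ^ n) → ℤ_[p]} (hx : x ∈ A) : sh 1 x - x ∈ WA A := by
  set x' : A := ⟨x, hx⟩ - (x 0) • 1 with hx'def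
  have hcoe : (x' : Fin (p ^ n) → ℤ_[p]) = x - (x 0) • 1 := by
    push_cast [hx'def]; rfl
  have hx'm : x' ∈ maximalIdeal A := by
    rw [mker 0]
    rw [hcoe]
    simp
  have hmem := htriv x' hx'm
  have : sh 1 x - x = ((σA x' - x' : A) : Fin (p ^ n) → ℤ_[p]) := by
    push_cast
    rw [hσA x', hcoe]
    funext i
    simp only [sh, Pi.sub_apply, Pi.smul_apply, Pi.one_apply, smul_eq_mul, Nat.cast_one]
    ring
  rw [this]
  exact ⟨σA x' - x', Submodule.restrictScalars_mem _ _ _ |>.mpr hmem, rfl⟩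

theorem delta_mem : ∀ (t : ℕ) {x : Fin (p ^ n) → ℤ_[p]}, x ∈ A → sh t x - x ∈ WA A := by
  intro t
  induction t with
  | zero =>
    intro x hx
    have : sh 0 x - x = 0 := by
      funext i; simp [sh]
    rw [this]; exact (WA A).zero_mem
  | succ t ih =>
    intro x hx
    have key : sh (t + 1) x - x = sh t (sh 1 x - x) + (sh t x - x) := by
      funext i
      show x (i + ((t : ℕ) + 1 : ℕ)) - x i =
        (x (i + (t : Fin (p ^ n)) + 1) - x (i + (t : Fin (p ^ n)))) + (x (i + (t : Fin (p ^ n))) - x i)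
      push_cast
      rw [add_assoc]
      ring
    rw [key]
    exact (WA A).add_mem (WA_sh σA hσA t (delta_one_mem σA hσA htriv hx)) (ih hx)

end Sigma

end Main

/-- all coordinates equal of an element divisible by arbitrary powers of `p` -/
theorem dvd_all_eq_zero {p : ℕ} [hp : Fact p.Prime] (x : ℤ_[p])
    (h : ∀ k : ℕ, (p : ℤ_[p]) ^ k ∣ x) : x = 0 := by
  by_contra hx
  have h0 : 0 < ‖x‖ := norm_pos_iff.mpr hx
  have hp1 : (1 : ℝ) < (p : ℝ) := by exact_mod_cast hp.out.one_lt
  obtain ⟨k, hk⟩ := exists_pow_lt_of_lt_one h0 (y := (p : ℝ)⁻¹) (inv_lt_one_of_one_lt₀ hp1)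
  have hle : ‖x‖ ≤ (p : ℝ) ^ (-(k : ℤ)) := by
    rw [PadicInt.norm_le_pow_iff_mem_span_pow, Ideal.mem_span_singleton]
    exact h k
  rw [zpow_neg, zpow_natCast, ← inv_pow] at hle
  exact absurd (lt_of_le_of_lt hle hk) (lt_irrefl _)

/-- the submodule of `d`-periodic vectors -/
noncomputable def perSub (p : ℕ) [Fact p.Prime] (N d : ℕ) [NeZero N] :
    Submodule ℤ_[p] (Fin N → ℤ_[p]) where
  carrier := {x | ∀ i : Fin N, x (i + ((d : ℕ) : Fin N)) = x i}
  add_mem' := fun hx hy i => by simp [Pi.add_apply, hx i, hy i]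
  zero_mem' := fun i => rfl
  smul_mem' := fun r x hx i => by simp [Pi.smul_apply, hx i]

theorem perSub_mem {p : ℕ} [Fact p.Prime] {N d : ℕ} [NeZero N] {x : Fin N → ℤ_[p]} :
    x ∈ perSub p N d ↔ ∀ i : Fin N, x (i + ((d : ℕ) : Fin N)) = x i := Iff.rfl

theorem perSub_iter {p : ℕ} [Fact p.Prime] {N d : ℕ} [NeZero N] {x : Fin N → ℤ_[p]}
    (hx : x ∈ perSub p N d) : ∀ (q : ℕ) (i : Fin N), x (i + ((q * d : ℕ) : Fin N)) = x i := by
  intro q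
  induction q with
  | zero => intro i; simp
  | succ q ih =>
    intro i
    have h : ((q + 1) * d : ℕ) = (q * d : ℕ) + d := by ring
    rw [h, Nat.cast_add, ← add_assoc, hx _]
    exact ih i

theorem perSub_ext_mem {p : ℕ} [Fact p.Prime] {N d : ℕ} [NeZero N]
    (hd0 : 0 < d) (hdvd : d ∣ N) (hlt : d < N) (g : Fin d → ℤ_[p]) :
    (fun i : Fin N => g (Fin.mk (i.val % d) (Nat.mod_lt _ hd0))) ∈ perSub p N d := by
  rw [perSub_mem]
  intro i
  have h1 : ((i + ((d : ℕ) : Fin N)).val) % d = i.val % d := by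
    rw [Fin.val_add, Fin.val_natCast, Nat.mod_mod_of_dvd _ hdvd,
      Nat.mod_eq_of_lt hlt, Nat.add_mod_right]
  simp only [h1]

noncomputable def perExtend (p : ℕ) [Fact p.Prime] (N d : ℕ) [NeZero N]
    (hd0 : 0 < d) (hdvd : d ∣ N) (hlt : d < N) :
    (Fin d → ℤ_[p]) →ₗ[ℤ_[p]] perSub p N d where
  toFun g := ⟨fun i => g (Fin.mk (i.val % d) (Nat.mod_lt _ hd0)), perSub_ext_mem hd0 hdvd hlt g⟩
  map_add' a b := by apply Subtype.ext; funext i; rfl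
  map_smul' r a := by apply Subtype.ext; funext i; rfl

noncomputable def perRestrict (p : ℕ) [Fact p.Prime] (N d : ℕ) [NeZero N] :
    perSub p N d →ₗ[ℤ_[p]] (Fin d → ℤ_[p]) where
  toFun v := fun j => v.1 ((j.val : ℕ) : Fin N)
  map_add' a b := rfl
  map_smul' r a := rfl

/-- the `d`-periodic vectors form a module of rank `d` -/
noncomputable def perEquiv (p : ℕ) [Fact p.Prime] (N d : ℕ) [NeZero N]
    (hd0 : 0 < d) (hdvd : d ∣ N) (hlt : d < N) :
    (Fin d → ℤ_[p]) ≃ₗ[ℤ_[p]] perSub p N d := by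
  refine LinearEquiv.ofLinear (perExtend p N d hd0 hdvd hlt) (perRestrict p N d) ?_ ?_
  · -- e ∘ f = id on perSub
    apply LinearMap.ext
    intro v
    apply Subtype.ext
    funext i
    show v.1 (((i.val % d : ℕ) : Fin N)) = v.1 i
    have h2 : v.1 (((i.val % d : ℕ) : Fin N) + ((i.val / d * d : ℕ) : Fin N)) =
        v.1 (((i.val % d : ℕ) : Fin N)) := perSub_iter v.2 (i.val / d) _
    rw [← h2, ← Nat.cast_add, Nat.mod_add_div' i.val d, Fin.cast_val_eq_self]
  · -- f ∘ e = id
    apply LinearMap.ext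
    intro g
    funext j
    show g (Fin.mk (((j.val : ℕ) : Fin N).val % d) _) = g j
    congr 1
    apply Fin.ext
    show ((j.val : ℕ) : Fin N).val % d = j.val
    rw [Fin.val_natCast, Nat.mod_eq_of_lt (lt_of_lt_of_le j.2 (le_of_lt hlt)),
      Nat.mod_eq_of_lt j.2]

/-- if all members of `A` are `d`-periodic, the rank of `A` is at most `d`,
contradicting that it is `p ^ n`. -/
theorem rank_contra (p : ℕ) [hp : Fact p.Prime] (n : ℕ)
    (A : Subalgebra ℤ_[p] (Fin (p ^ n) → ℤ_[p]))
    (hrank : Module.finrank ℤ_[p] A = p ^ n)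
    (d : ℕ) (hd0 : 0 < d) (hdvd : d ∣ p ^ n) (hlt : d < p ^ n)
    (hper : ∀ x ∈ A, ∀ i : Fin (p ^ n),
      x (i + ((d : ℕ) : Fin (p ^ n))) = x i) : False := by
  haveI : NeZero (p ^ n) := ⟨(pow_pos hp.out.pos n).ne'⟩
  have eequiv := perEquiv p (p ^ n) d hd0 hdvd hlt
  haveI : Module.Finite ℤ_[p] (perSub p (p ^ n) d) := Module.Finite.equiv eequiv
  have hfV : Module.finrank ℤ_[p] (perSub p (p ^ n) d) = d := by
    rw [← eequiv.finrank_eq, Module.finrank_pi, Fintype.card_fin]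
  have hincl : ∃ f : A →ₗ[ℤ_[p]] perSub p (p ^ n) d, Function.Injective f := by
    refine ⟨{ toFun := fun x => ⟨x.1, hper x.1 x.2⟩,
              map_add' := fun a b => by apply Subtype.ext; push_cast; rfl,
              map_smul' := fun r a => by apply Subtype.ext; push_cast; rfl }, ?_⟩
    intro a b hab
    have h2 := congrArg Subtype.val hab
    exact Subtype.ext h2
  obtain ⟨f, hf⟩ := hincl
  have hle := LinearMap.finrank_le_finrank_of_injective hf
  rw [hrank, hfV] at hle
  have : d < d := lt_of_lt_of_le hlt hle
  omega

section Diff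

variable {p : ℕ} [hp : Fact p.Prime] {N : ℕ} [NeZero N]

/-- first difference along the orbit of step `M` -/
noncomputable def Dq (M : ℕ) (x : Fin N → ℤ_[p]) (l : ℕ) : ℤ_[p] :=
  x (((l + 1) * M : ℕ) : Fin N) - x ((l * M : ℕ) : Fin N)

/-- second-step difference along the orbit of step `M` -/
noncomputable def Xq (M : ℕ) (x : Fin N → ℤ_[p]) (l : ℕ) : ℤ_[p] :=
  x (((l + 2) * M : ℕ) : Fin N) - x ((l * M : ℕ) : Fin N)

theorem Dq_add (M : ℕ) (x y : Fin N → ℤ_[p]) (l : ℕ) :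
    Dq M (x + y) l = Dq M x l + Dq M y l := by
  simp only [Dq, Pi.add_apply]; ring

theorem Dq_smul (M : ℕ) (r : ℤ_[p]) (x : Fin N → ℤ_[p]) (l : ℕ) :
    Dq M (r • x) l = r * Dq M x l := by
  simp only [Dq, Pi.smul_apply, smul_eq_mul]; ring

theorem Xq_add (M : ℕ) (x y : Fin N → ℤ_[p]) (l : ℕ) :
    Xq M (x + y) l = Xq M x l + Xq M y l := by
  simp only [Xq, Pi.add_apply]; ring

theorem Xq_smul (M : ℕ) (r : ℤ_[p]) (x : Fin N → ℤ_[p]) (l : ℕ) :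
    Xq M (r • x) l = r * Xq M x l := by
  simp only [Xq, Pi.smul_apply, smul_eq_mul]; ring

theorem Dq_mul (M : ℕ) (x y : Fin N → ℤ_[p]) (l : ℕ) :
    Dq M (x * y) l = x (((l + 1) * M : ℕ) : Fin N) * Dq M y l
      + y ((l * M : ℕ) : Fin N) * Dq M x l := by
  simp only [Dq, Pi.mul_apply]; ring

theorem Xq_mul (M : ℕ) (x y : Fin N → ℤ_[p]) (l : ℕ) :
    Xq M (x * y) l = x (((l + 2) * M : ℕ) : Fin N) * Xq M y l
      + y ((l * M : ℕ) : Fin N) * Xq M x l := by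
  simp only [Xq, Pi.mul_apply]; ring

theorem Dq_second_mul (M : ℕ) (x y : Fin N → ℤ_[p]) (l : ℕ) :
    Dq M (x * y) (l + 1) - Dq M (x * y) l
      = x (((l + 2) * M : ℕ) : Fin N) * (Dq M y (l + 1) - Dq M y l)
        + 2 * Dq M x (l + 1) * Dq M y l
        + (Dq M x (l + 1) - Dq M x l) * y ((l * M : ℕ) : Fin N) := by
  simp only [Dq, Pi.mul_apply]
  rw [show l + 1 + 1 = l + 2 by omega]
  ring

theorem Xq_second_mul (M : ℕ) (x y : Fin N → ℤ_[p]) (l : ℕ) :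
    Xq M (x * y) (l + 1) - Xq M (x * y) l
      = x (((l + 3) * M : ℕ) : Fin N) * (Xq M y (l + 1) - Xq M y l)
        + Xq M y l * Dq M x (l + 2)
        + y (((l + 1) * M : ℕ) : Fin N) * (Xq M x (l + 1) - Xq M x l)
        + Xq M x l * Dq M y l := by
  simp only [Xq, Dq, Pi.mul_apply]
  rw [show l + 1 + 2 = l + 3 by omega, show l + 2 + 1 = l + 3 by omega]
  ring

theorem Dq_as_delta (M : ℕ) (x : Fin N → ℤ_[p]) (l : ℕ) :
    Dq M x l = (sh M x - x) ((l * M : ℕ) : Fin N) := by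
  simp only [Dq, sh, Pi.sub_apply, ← Nat.cast_add]
  rw [show l * M + M = (l + 1) * M by ring]

theorem Xq_as_delta (M : ℕ) (x : Fin N → ℤ_[p]) (l : ℕ) :
    Xq M x l = (sh (2 * M) x - x) ((l * M : ℕ) : Fin N) := by
  simp only [Xq, sh, Pi.sub_apply, ← Nat.cast_add]
  rw [show l * M + 2 * M = (l + 2) * M by ring]

theorem Dq_delta (M : ℕ) (x : Fin N → ℤ_[p]) (l : ℕ) :
    Dq M (sh M x - x) l = Dq M x (l + 1) - Dq M x l := by
  simp only [Dq, sh, Pi.sub_apply, ← Nat.cast_add]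
  rw [show (l + 1) * M + M = (l + 1 + 1) * M by ring, show l * M + M = (l + 1) * M by ring]
  try ring

theorem Xq_delta (M : ℕ) (x : Fin N → ℤ_[p]) (l : ℕ) :
    Xq M (sh M x - x) l = Xq M x (l + 1) - Xq M x l := by
  simp only [Xq, sh, Pi.sub_apply, ← Nat.cast_add]
  rw [show (l + 2) * M + M = (l + 1 + 2) * M by ring, show l * M + M = (l + 1) * M by ring]
  try ring

theorem Dq_sum (M : ℕ) (x : Fin N → ℤ_[p]) (t : ℕ) :
    ∑ l ∈ Finset.range t, Dq M x l
      = x ((t * M : ℕ) : Fin N) - x ((0 * M : ℕ) : Fin N) :=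
  Finset.sum_range_sub (fun l => x ((l * M : ℕ) : Fin N)) t

/-- helper for products of divisibilities -/
theorem dvd_mul_pow {a b c : ℕ} {u v : ℤ_[p]} (h : a + b = c)
    (hu : (p : ℤ_[p]) ^ a ∣ u) (hv : (p : ℤ_[p]) ^ b ∣ v) : (p : ℤ_[p]) ^ c ∣ u * v := by
  subst h; rw [pow_add]; exact mul_dvd_mul hu hv

theorem dvd_weaken {a b : ℕ} (h : a ≤ b) {u : ℤ_[p]} (hu : (p : ℤ_[p]) ^ b ∣ u) :
    (p : ℤ_[p]) ^ a ∣ u := dvd_trans (pow_dvd_pow _ h) hu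

end Diff

/-- The key induction for odd `p`: every element of `A` is `p ^ m`-periodic. -/
theorem core_odd (p : ℕ) [hp : Fact p.Prime] (m : ℕ)
    (A : Subalgebra ℤ_[p] (Fin (p ^ (m + 1)) → ℤ_[p]))
    (hloc : IsLocalRing A)
    (σA : A → A)
    (hσA : ∀ x : A, (σA x : Fin (p ^ (m + 1)) → ℤ_[p])
      = fun i => (x : Fin (p ^ (m + 1)) → ℤ_[p]) (i + 1))
    (htriv : ∀ x : A, x ∈ maximalIdeal A → σA x - x ∈ (maximalIdeal A) ^ 2)
    (hodd : p ≠ 2) :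
    ∀ x ∈ A, ∀ l, Dq (p ^ m) x l = 0 := by
  haveI : NeZero (p ^ (m + 1)) := ⟨(pow_pos hp.out.pos (m + 1)).ne'⟩
  haveI := hloc
  -- the Gauss sum
  obtain ⟨c, hc⟩ : Odd p := hp.out.odd_of_ne_two hodd
  have hgauss : ∑ l ∈ Finset.range p, l = p * c := by
    have h2 := Finset.sum_range_id_mul_two p
    have h3 : p - 1 = 2 * c := by omega
    rw [h3] at h2
    have h4 : (∑ l ∈ Finset.range p, l) * 2 = p * c * 2 := by rw [h2]; ring
    exact Nat.eq_of_mul_eq_mul_right two_pos h4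
  have hpne : (p : ℤ_[p]) ≠ 0 := Nat.cast_ne_zero.mpr hp.out.ne_zero
  -- the vanishing sum of differences
  have hsum0 : ∀ x : Fin (p ^ (m + 1)) → ℤ_[p], ∑ l ∈ Finset.range p, Dq (p ^ m) x l = 0 := by
    intro x
    rw [Dq_sum]
    rw [show p * p ^ m = p ^ (m + 1) from (pow_succ' p m).symm]
    simp
  -- the main induction
  have main : ∀ (k : ℕ), ∀ x ∈ A, ∀ l, (p : ℤ_[p]) ^ (k + 2) ∣ Dq (p ^ m) x l := by
    intro k
    induction k with
    | zero =>
      intro x hx l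
      rw [Dq_as_delta]
      exact WA_coord (delta_mem σA hσA htriv (p ^ m) hx) _
    | succ k ih =>
      intro x hx
      -- step 1 : differences of elements of `WA` gain one power
      have st1 : ∀ w ∈ WA A, ∀ l, (p : ℤ_[p]) ^ (k + 3) ∣ Dq (p ^ m) w l := by
        have h := WA_le (A := A) (mkSub ((p : ℤ_[p]) ^ (k + 3)) (Dq (p ^ m))
          (Dq_add (p ^ m)) (Dq_smul (p ^ m))) ?_
        · exact fun w hw => h w hw
        · intro a b ha hb ha' hb' l
          show (p : ℤ_[p]) ^ (k + 3) ∣ Dq (p ^ m) (a * b) l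
          rw [Dq_mul]
          refine dvd_add (dvd_mul_pow (a := 1) (b := k + 2) (by omega) ?_ (ih b hb l))
            (dvd_mul_pow (a := 1) (b := k + 2) (by omega) ?_ (ih a ha l))
          · rw [pow_one]; exact ha' _
          · rw [pow_one]; exact hb' _
      -- step 2 : second differences of elements of `A`
      have st2 : ∀ x ∈ A, ∀ l, (p : ℤ_[p]) ^ (k + 3) ∣ Dq (p ^ m) x (l + 1) - Dq (p ^ m) x l := by
        intro x hx l
        rw [← Dq_delta]
        exact st1 _ (delta_mem σA hσA htriv (p ^ m) hx) l
      -- step 3 : second differences of elements of `WA` gain two powers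
      have st3 : ∀ w ∈ WA A, ∀ l,
          (p : ℤ_[p]) ^ (k + 4) ∣ Dq (p ^ m) w (l + 1) - Dq (p ^ m) w l := by
        have h := WA_le (A := A) (mkSub ((p : ℤ_[p]) ^ (k + 4))
          (fun y l => Dq (p ^ m) y (l + 1) - Dq (p ^ m) y l)
          (by intro a b l; simp only [Dq_add]; ring)
          (by intro r a l; simp only [Dq_smul]; ring)) ?_
        · exact fun w hw => h w hw
        · intro a b ha hb ha' hb' l
          show (p : ℤ_[p]) ^ (k + 4) ∣ Dq (p ^ m) (a * b) (l + 1) - Dq (p ^ m) (a * b) l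
          rw [Dq_second_mul]
          refine dvd_add (dvd_add (dvd_mul_pow (a := 1) (b := k + 3) (by omega) ?_ (st2 b hb l)) ?_)
            (dvd_mul_pow (a := k + 3) (b := 1) (by omega) (st2 a ha l) ?_)
          · rw [pow_one]; exact ha' _
          · have h1 := dvd_mul_pow (a := k + 2) (b := k + 2) (c := 2 * k + 4) (by omega)
              (ih a ha (l + 1)) (ih b hb l)
            have h2 : (p : ℤ_[p]) ^ (k + 4) ∣ Dq (p ^ m) a (l + 1) * Dq (p ^ m) b l :=
              dvd_weaken (by omega) h1
            rw [show (2 : ℤ_[p]) * Dq (p ^ m) a (l + 1) * Dq (p ^ m) b l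
              = 2 * (Dq (p ^ m) a (l + 1) * Dq (p ^ m) b l) by ring]
            exact (h2.mul_left 2)
          · rw [pow_one]; exact hb' _
      -- step 4 : third differences of elements of `A`
      have st4 : ∀ x ∈ A, ∀ l, (p : ℤ_[p]) ^ (k + 4) ∣
          (Dq (p ^ m) x (l + 1 + 1) - Dq (p ^ m) x (l + 1))
            - (Dq (p ^ m) x (l + 1) - Dq (p ^ m) x l) := by
        intro x hx l
        rw [← Dq_delta, ← Dq_delta]
        exact st3 _ (delta_mem σA hσA htriv (p ^ m) hx) l
      -- step 5 : second difference is almost constant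
      have st5 : ∀ x ∈ A, ∀ l, (p : ℤ_[p]) ^ (k + 4) ∣
          (Dq (p ^ m) x (l + 1) - Dq (p ^ m) x l)
            - (Dq (p ^ m) x 1 - Dq (p ^ m) x 0) := by
        intro x hx l
        induction l with
        | zero => simp
        | succ l ihl =>
          have heq : (Dq (p ^ m) x (l + 1 + 1) - Dq (p ^ m) x (l + 1))
              - (Dq (p ^ m) x 1 - Dq (p ^ m) x 0)
            = ((Dq (p ^ m) x (l + 1 + 1) - Dq (p ^ m) x (l + 1))
                - (Dq (p ^ m) x (l + 1) - Dq (p ^ m) x l))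
              + ((Dq (p ^ m) x (l + 1) - Dq (p ^ m) x l)
                - (Dq (p ^ m) x 1 - Dq (p ^ m) x 0)) := by ring
          rw [heq]
          exact dvd_add (st4 x hx l) ihl
      -- step 6 : arithmetic progression structure
      have st6 : ∀ x ∈ A, ∀ l, (p : ℤ_[p]) ^ (k + 4) ∣
          Dq (p ^ m) x l - (Dq (p ^ m) x 0
            + (l : ℤ_[p]) * (Dq (p ^ m) x 1 - Dq (p ^ m) x 0)) := by
        intro x hx l
        induction l with
        | zero => simp
        | succ l ihl =>
          have heq : Dq (p ^ m) x (l + 1) - (Dq (p ^ m) x 0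
              + ((l + 1 : ℕ) : ℤ_[p]) * (Dq (p ^ m) x 1 - Dq (p ^ m) x 0))
            = ((Dq (p ^ m) x (l + 1) - Dq (p ^ m) x l)
                - (Dq (p ^ m) x 1 - Dq (p ^ m) x 0))
              + (Dq (p ^ m) x l - (Dq (p ^ m) x 0
                + (l : ℤ_[p]) * (Dq (p ^ m) x 1 - Dq (p ^ m) x 0))) := by
            push_cast
            ring
          rw [heq]
          exact dvd_add (st5 x hx l) ihl
      intro l
      -- sum over a full period
      set s : ℤ_[p] := Dq (p ^ m) x 1 - Dq (p ^ m) x 0 with hs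
      have st8 : (p : ℤ_[p]) ^ (k + 4) ∣
          ∑ l ∈ Finset.range p, (Dq (p ^ m) x 0 + (l : ℤ_[p]) * s) := by
        have heq : ∑ l ∈ Finset.range p, (Dq (p ^ m) x 0 + (l : ℤ_[p]) * s)
            = ∑ l ∈ Finset.range p,
                ((Dq (p ^ m) x 0 + (l : ℤ_[p]) * s) - Dq (p ^ m) x l) := by
          rw [Finset.sum_sub_distrib, hsum0, sub_zero]
        rw [heq]
        refine Finset.dvd_sum fun l _ => ?_
        rw [show (Dq (p ^ m) x 0 + (l : ℤ_[p]) * s) - Dq (p ^ m) x l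
          = -(Dq (p ^ m) x l - (Dq (p ^ m) x 0 + (l : ℤ_[p]) * s)) by ring]
        exact (st6 x hx l).neg_right
      have st9 : ∑ l ∈ Finset.range p, (Dq (p ^ m) x 0 + (l : ℤ_[p]) * s)
          = (p : ℤ_[p]) * (Dq (p ^ m) x 0 + (c : ℤ_[p]) * s) := by
        rw [Finset.sum_add_distrib, Finset.sum_const, Finset.card_range, ← Finset.sum_mul]
        have hcast : ∑ l ∈ Finset.range p, (l : ℤ_[p])
            = ((∑ l ∈ Finset.range p, l : ℕ) : ℤ_[p]) := by
          rw [Nat.cast_sum]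
        rw [hcast, hgauss]
        push_cast
        ring
      have st10 : (p : ℤ_[p]) ^ (k + 3) ∣ Dq (p ^ m) x 0 + (c : ℤ_[p]) * s := by
        have h1 : (p : ℤ_[p]) ^ (k + 4)
            ∣ (p : ℤ_[p]) * (Dq (p ^ m) x 0 + (c : ℤ_[p]) * s) := by
          rw [← st9]; exact st8
        rw [show (k + 4) = (k + 3) + 1 by omega, pow_succ'] at h1
        exact (mul_dvd_mul_iff_left hpne).mp h1
      have hsdvd : (p : ℤ_[p]) ^ (k + 3) ∣ s := st2 x hx 0
      have st11 : (p : ℤ_[p]) ^ (k + 3) ∣ Dq (p ^ m) x 0 := by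
        have heq : Dq (p ^ m) x 0 = (Dq (p ^ m) x 0 + (c : ℤ_[p]) * s) - (c : ℤ_[p]) * s := by
          ring
        rw [heq]
        exact dvd_sub st10 (hsdvd.mul_left _)
      have heq : Dq (p ^ m) x l
          = (Dq (p ^ m) x l - (Dq (p ^ m) x 0 + (l : ℤ_[p]) * s))
            + Dq (p ^ m) x 0 + (l : ℤ_[p]) * s := by ring
      rw [heq]
      exact dvd_add (dvd_add (dvd_weaken (by omega) (st6 x hx l)) st11) (hsdvd.mul_left _)
  intro x hx l
  refine dvd_all_eq_zero _ fun k => ?_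
  exact dvd_weaken (by omega) (main k x hx l)

/-- The key induction for `p = 2`: every element of `A` is `2 ^ (m + 1)`-periodic. -/
theorem core_even (m : ℕ) [hp : Fact (Nat.Prime 2)]
    (A : Subalgebra ℤ_[2] (Fin (2 ^ (m + 2)) → ℤ_[2]))
    (hloc : IsLocalRing A)
    (σA : A → A)
    (hσA : ∀ x : A, (σA x : Fin (2 ^ (m + 2)) → ℤ_[2])
      = fun i => (x : Fin (2 ^ (m + 2)) → ℤ_[2]) (i + 1))
    (htriv : ∀ x : A, x ∈ maximalIdeal A → σA x - x ∈ (maximalIdeal A) ^ 2) :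
    ∀ x ∈ A, ∀ l, Xq (2 ^ m) x l = 0 := by
  haveI : NeZero (2 ^ (m + 2)) := ⟨(pow_pos (by norm_num) (m + 2)).ne'⟩
  haveI := hloc
  have hq : ((2 : ℕ) : ℤ_[2]) ≠ 0 := Nat.cast_ne_zero.mpr (by norm_num)
  have hper4 : ∀ (x : Fin (2 ^ (m + 2)) → ℤ_[2]) (l : ℕ),
      x (((l + 4) * 2 ^ m : ℕ) : Fin (2 ^ (m + 2)))
        = x ((l * 2 ^ m : ℕ) : Fin (2 ^ (m + 2))) := by
    intro x l
    rw [show (l + 4) * 2 ^ m = l * 2 ^ m + 2 ^ (m + 2) by rw [pow_add]; ring]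
    rw [Nat.cast_add, Fin.natCast_self, add_zero]
  have he5 : ∀ (x : Fin (2 ^ (m + 2)) → ℤ_[2]) (l : ℕ),
      Xq (2 ^ m) x (l + 2) = -(Xq (2 ^ m) x l) := by
    intro x l
    simp only [Xq]
    rw [show l + 2 + 2 = l + 4 by omega, hper4 x l]
    ring
  have hD2 : ∀ x ∈ A, ∀ l, ((2 : ℕ) : ℤ_[2]) ^ 2 ∣ Dq (2 ^ m) x l := by
    intro x hx l
    rw [Dq_as_delta]
    exact WA_coord (delta_mem σA hσA htriv (2 ^ m) hx) _
  have main : ∀ (k : ℕ), ∀ x ∈ A, ∀ l, ((2 : ℕ) : ℤ_[2]) ^ (k + 2) ∣ Xq (2 ^ m) x l := by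
    intro k
    induction k with
    | zero =>
      intro x hx l
      rw [Xq_as_delta]
      exact WA_coord (delta_mem σA hσA htriv (2 * 2 ^ m) hx) _
    | succ k ih =>
      have e1 : ∀ w ∈ WA A, ∀ l, ((2 : ℕ) : ℤ_[2]) ^ (k + 3) ∣ Xq (2 ^ m) w l := by
        have h := WA_le (A := A) (mkSub (((2 : ℕ) : ℤ_[2]) ^ (k + 3)) (Xq (2 ^ m))
          (Xq_add (2 ^ m)) (Xq_smul (2 ^ m))) ?_
        · exact fun w hw => h w hw
        · intro a b ha hb ha' hb' l
          show ((2 : ℕ) : ℤ_[2]) ^ (k + 3) ∣ Xq (2 ^ m) (a * b) l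
          rw [Xq_mul]
          refine dvd_add (dvd_mul_pow (a := 1) (b := k + 2) (by omega) ?_ (ih b hb l))
            (dvd_mul_pow (a := 1) (b := k + 2) (by omega) ?_ (ih a ha l))
          · rw [pow_one]; exact ha' _
          · rw [pow_one]; exact hb' _
      have e2 : ∀ x ∈ A, ∀ l,
          ((2 : ℕ) : ℤ_[2]) ^ (k + 3) ∣ Xq (2 ^ m) x (l + 1) - Xq (2 ^ m) x l := by
        intro x hx l
        rw [← Xq_delta]
        exact e1 _ (delta_mem σA hσA htriv (2 ^ m) hx) l
      have e3 : ∀ w ∈ WA A, ∀ l,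
          ((2 : ℕ) : ℤ_[2]) ^ (k + 4) ∣ Xq (2 ^ m) w (l + 1) - Xq (2 ^ m) w l := by
        have h := WA_le (A := A) (mkSub (((2 : ℕ) : ℤ_[2]) ^ (k + 4))
          (fun y l => Xq (2 ^ m) y (l + 1) - Xq (2 ^ m) y l)
          (by intro a b l; simp only [Xq_add]; ring)
          (by intro r a l; simp only [Xq_smul]; ring)) ?_
        · exact fun w hw => h w hw
        · intro a b ha hb ha' hb' l
          show ((2 : ℕ) : ℤ_[2]) ^ (k + 4)
            ∣ Xq (2 ^ m) (a * b) (l + 1) - Xq (2 ^ m) (a * b) l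
          rw [Xq_second_mul]
          refine dvd_add (dvd_add (dvd_add
            (dvd_mul_pow (a := 1) (b := k + 3) (by omega) ?_ (e2 b hb l))
            (dvd_mul_pow (a := k + 2) (b := 2) (by omega) (ih b hb l) (hD2 a ha _)))
            (dvd_mul_pow (a := 1) (b := k + 3) (by omega) ?_ (e2 a ha l)))
            (dvd_mul_pow (a := k + 2) (b := 2) (by omega) (ih a ha l) (hD2 b hb _))
          · rw [pow_one]; exact ha' _
          · rw [pow_one]; exact hb' _
      intro x hx
      have e4 : ∀ l, ((2 : ℕ) : ℤ_[2]) ^ (k + 4) ∣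
          (Xq (2 ^ m) x (l + 1 + 1) - Xq (2 ^ m) x (l + 1))
            - (Xq (2 ^ m) x (l + 1) - Xq (2 ^ m) x l) := by
        intro l
        rw [← Xq_delta, ← Xq_delta]
        exact e3 _ (delta_mem σA hσA htriv (2 ^ m) hx) l
      have e7 : ∀ l, ((2 : ℕ) : ℤ_[2]) ^ (k + 3) ∣ Xq (2 ^ m) x (l + 1) := by
        intro l
        have heq : (Xq (2 ^ m) x (l + 1 + 1) - Xq (2 ^ m) x (l + 1))
            - (Xq (2 ^ m) x (l + 1) - Xq (2 ^ m) x l)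
            = -(((2 : ℕ) : ℤ_[2]) * Xq (2 ^ m) x (l + 1)) := by
          rw [show l + 1 + 1 = l + 2 by omega, he5 x l]
          push_cast
          ring
        have h1 := e4 l
        rw [heq, dvd_neg] at h1
        rw [show k + 4 = (k + 3) + 1 by omega, pow_succ'] at h1
        exact (mul_dvd_mul_iff_left hq).mp h1
      intro l
      cases l with
      | zero =>
        have h0 : Xq (2 ^ m) x (0 + 2) = -(Xq (2 ^ m) x 0) := he5 x 0
        have h1 : Xq (2 ^ m) x 0 = -(Xq (2 ^ m) x (1 + 1)) := by
          rw [show (1 + 1 : ℕ) = 0 + 2 by omega, h0]; ring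
        rw [h1, dvd_neg]
        exact e7 1
      | succ l => exact e7 l
  intro x hx l
  refine dvd_all_eq_zero _ fun k => ?_
  exact dvd_weaken (by omega) (main k x hx l)

end Stmt5Aux



set_option maxHeartbeats 1000000 in
/-- Fakhruddin. Let `p` be a prime and `n ≥ 0`. Let `A` be a
`ℤ_p`-subalgebra of the product algebra `(ℤ_p)^(p^n)` which is a local ring with maximal
ideal `𝔪`, free of rank `p^n` as a `ℤ_p`-module, preserved by the cyclic coordinate
permutation `σ`, and such that `σ` acts trivially on `𝔪/𝔪²`. Then `n = 0` if `p ≠ 2`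
and `n ≤ 1` if `p = 2`. -/
theorem stmt5 (p : ℕ) [hp : Fact p.Prime] (n : ℕ)
    (A : Subalgebra ℤ_[p] (Fin (p ^ n) → ℤ_[p]))
    (hloc : IsLocalRing A)
    (hfree : Module.Free ℤ_[p] A)
    (hrank : Module.finrank ℤ_[p] A = p ^ n)
    -- `σ` sends `(a₀, a₁, …, a_{pⁿ-1})` to `(a₁, …, a_{pⁿ-1}, a₀)`; it preserves `A`
    -- and `σA` is the induced map on `A`:
    (σA : A → A)
    (hσA : ∀ x : A, (σA x : Fin (p ^ n) → ℤ_[p]) = fun i => (x : Fin (p ^ n) → ℤ_[p]) (i + 1))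
    -- `σ` acts trivially on `𝔪/𝔪²`:
    (htriv : ∀ x : A, x ∈ IsLocalRing.maximalIdeal A →
      σA x - x ∈ (IsLocalRing.maximalIdeal A) ^ 2) :
    (p ≠ 2 → n = 0) ∧ (p = 2 → n ≤ 1) := by
  constructor
  · intro hne
    by_contra h0
    obtain ⟨m, rfl⟩ : ∃ m, n = m + 1 := ⟨n - 1, by omega⟩
    haveI : NeZero (p ^ (m + 1)) := ⟨(pow_pos hp.out.pos _).ne'⟩
    haveI := hloc
    have hz := Stmt5Aux.core_odd p m A hloc σA hσA htriv hne
    have hper : ∀ x ∈ A, ∀ i : Fin (p ^ (m + 1)),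
        x (i + ((p ^ m : ℕ) : Fin (p ^ (m + 1)))) = x i := by
      intro x hx i
      have h0 := hz (Stmt5Aux.sh i.val x) (Stmt5Aux.shA_mem σA hσA i.val hx) 0
      simp only [Stmt5Aux.Dq, Stmt5Aux.sh, one_mul, zero_mul, zero_add, Nat.cast_zero,
        Fin.cast_val_eq_self] at h0
      have h1 := sub_eq_zero.mp h0
      rw [add_comm ((p ^ m : ℕ) : Fin (p ^ (m + 1))) i] at h1
      exact h1
    exact Stmt5Aux.rank_contra p (m + 1) A hrank (p ^ m) (pow_pos hp.out.pos m)
      ⟨p, pow_succ p m⟩ (Nat.pow_lt_pow_right hp.out.one_lt (by omega)) hper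
  · intro h2
    by_contra h0
    subst h2
    obtain ⟨m, rfl⟩ : ∃ m, n = m + 2 := ⟨n - 2, by omega⟩
    haveI : NeZero ((2 : ℕ) ^ (m + 2)) := ⟨(pow_pos (by norm_num) _).ne'⟩
    haveI := hloc
    have hz := Stmt5Aux.core_even m A hloc σA hσA htriv
    have hper : ∀ x ∈ A, ∀ i : Fin (2 ^ (m + 2)),
        x (i + ((2 ^ (m + 1) : ℕ) : Fin (2 ^ (m + 2)))) = x i := by
      intro x hx i
      have h0 := hz (Stmt5Aux.sh i.val x) (Stmt5Aux.shA_mem σA hσA i.val hx) 0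
      simp only [Stmt5Aux.Xq, Stmt5Aux.sh, zero_mul, zero_add, Nat.cast_zero,
        Fin.cast_val_eq_self] at h0
      rw [show (0 + 2) * 2 ^ m = 2 ^ (m + 1) by rw [pow_succ]; ring] at h0
      have h1 := sub_eq_zero.mp h0
      rw [add_comm ((2 ^ (m + 1) : ℕ) : Fin (2 ^ (m + 2))) i] at h1
      exact h1
    exact Stmt5Aux.rank_contra 2 (m + 2) A hrank (2 ^ (m + 1))
      (pow_pos (by norm_num) _) ⟨2, pow_succ 2 (m + 1)⟩
      (Nat.pow_lt_pow_right (by norm_num) (by omega)) hper
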